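/- arXiv:2406.19718 — 2 statements merged into one kernel-verified Lean document; each statement's English description precedes it below -/
import Mathlib

section
/- For every μ > 0 and every t ≥ 0, t · tanh(t/μ) ≥ t - 0.2785 μ. -/
lemma exp_2785 : Real.exp 0.2785 ≥ 1.321131 := by
  have h := Real.sum_le_exp_of_nonneg (x := 0.2785) (by norm_num) 5
  simp [Finset.sum_range_succ, Nat.factorial] at h
  norm_num at h ⊢
  linarith

lemma exp_12785 : Real.exp 1.2785 ≥ 3.5911 := by
  have h1 : Real.exp 1.2785 = Real.exp 1 * Real.exp 0.2785 := by
    rw [← Real.exp_add]; norm_num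
  have h2 := Real.exp_one_gt_d9
  have h3 := exp_2785
  rw [h1]
  nlinarith [Real.exp_pos (0.2785 : ℝ)]

lemma key (y : ℝ) (hy : 0 ≤ y) : y ≤ 0.2785 * (Real.exp y + 1) := by
  rcases le_or_gt y 0.7 with h | h
  · nlinarith [Real.add_one_le_exp y]
  · have h1 : 1 + (y - 1.2785) ≤ Real.exp (y - 1.2785) := by linarith [Real.add_one_le_exp (y - 1.2785)]
    have h2 : Real.exp y = Real.exp 1.2785 * Real.exp (y - 1.2785) := by
      rw [← Real.exp_add]; ring_nf
    have hE := exp_12785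
    have h3 : Real.exp y ≥ 3.5911 * (y - 0.2785) := by
      rw [h2]
      nlinarith [Real.exp_pos (y - 1.2785)]
    nlinarith

theorem stmt_2 (μ t : ℝ) (hμ : 0 < μ) (ht : 0 ≤ t) :
    t * Real.tanh (t / μ) ≥ t - 0.2785 * μ := by
  set x := t / μ with hxdef
  have hx : 0 ≤ x := div_nonneg ht hμ.le
  have htx : t = x * μ := by rw [hxdef, div_mul_cancel₀ t hμ.ne']
  have hA : 0 < Real.exp x := Real.exp_pos x
  have hE : Real.exp (2 * x) = Real.exp x * Real.exp x := by
    rw [← Real.exp_add]; ring_nf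
  have htanh : Real.tanh x = (Real.exp (2 * x) - 1) / (Real.exp (2 * x) + 1) := by
    rw [Real.tanh_eq_sinh_div_cosh, Real.sinh_eq, Real.cosh_eq, Real.exp_neg, hE]
    have : Real.exp x ≠ 0 := ne_of_gt hA
    field_simp
  have hEpos : 0 < Real.exp (2 * x) + 1 := by positivity
  have hk := key (2 * x) (by linarith)
  rw [htanh]
  have heq : t * ((Real.exp (2 * x) - 1) / (Real.exp (2 * x) + 1)) - (t - 0.2785 * μ)
      = (0.2785 * μ * (Real.exp (2 * x) + 1) - 2 * t) / (Real.exp (2 * x) + 1) := by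
    field_simp
    ring
  have hnum : 0 ≤ 0.2785 * μ * (Real.exp (2 * x) + 1) - 2 * t := by
    have : 2 * t = μ * (2 * x) := by rw [htx]; ring
    rw [this]
    have := mul_le_mul_of_nonneg_left hk hμ.le
    linarith
  have := div_nonneg hnum hEpos.le
  linarith [heq ▸ this]
end

section
/- If η: [0, ∞) → ℝ^n is differentiable with ‖η‖² integrable on [0, ∞) and ‖η'(t)‖ bounded on [0, ∞), then η(t) → 0 as t → ∞. -/
open MeasureTheory in
theorem stmt_11 (n : ℕ) (η : ℝ → EuclideanSpace ℝ (Fin n))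
    (hdiff : Differentiable ℝ η)
    (hint : IntegrableOn (fun t => ‖η t‖ ^ 2) (Set.Ici 0))
    (hbd : ∃ C : ℝ, ∀ t, 0 ≤ t → ‖deriv η t‖ ≤ C) :
    Filter.Tendsto η Filter.atTop (nhds 0) := by
  by_contra hten
  -- extract ε and frequently large values
  rw [Metric.tendsto_atTop] at hten
  push_neg at hten
  obtain ⟨ε, hε, hfreq⟩ := hten
  simp only [dist_zero_right] at hfreq
  obtain ⟨C0, hC0⟩ := hbd
  set C : ℝ := max C0 1 with hC
  have hC1 : (1:ℝ) ≤ C := le_max_right _ _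
  have hCpos : (0:ℝ) < C := lt_of_lt_of_le one_pos hC1
  have hCbd : ∀ t, 0 ≤ t → ‖deriv η t‖ ≤ C := fun t ht => (hC0 t ht).trans (le_max_left _ _)
  set δ : ℝ := ε / (2 * C) with hδ
  have hδpos : 0 < δ := div_pos hε (by positivity)
  have hCδ : C * δ = ε / 2 := by
    field_simp [hδ]
    rw [hδ]; field_simp [hCpos.ne']
  -- Lipschitz on Ici 0
  have lip : ∀ s t : ℝ, 0 ≤ s → 0 ≤ t → ‖η t - η s‖ ≤ C * ‖t - s‖ := by
    intro s t hs ht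
    exact (convex_Ici (0:ℝ)).norm_image_sub_le_of_norm_deriv_le
      (fun x _ => hdiff x) (fun x hx => hCbd x hx) hs ht
  set f : ℝ → ℝ := fun t => ‖η t‖ ^ 2 with hf
  have hcont : Continuous f := (hdiff.continuous.norm).pow 2
  have hf0 : ∀ t, 0 ≤ f t := fun t => by positivity
  -- pointwise lower bound near a point where ‖η‖ ≥ ε
  have key : ∀ a : ℝ, 0 ≤ a → ε ≤ ‖η a‖ → ∀ s ∈ Set.Icc a (a + δ), (ε/2)^2 ≤ f s := by
    intro a ha hηa s hs
    have hs0 : 0 ≤ s := le_trans ha hs.1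
    have h1 : ‖η a - η s‖ ≤ C * ‖a - s‖ := lip s a hs0 ha
    have h2 : ‖a - s‖ ≤ δ := by
      rw [Real.norm_eq_abs, abs_sub_comm, abs_of_nonneg (by linarith [hs.1])]
      linarith [hs.2]
    have h3 : ‖η a - η s‖ ≤ ε / 2 := by
      calc ‖η a - η s‖ ≤ C * ‖a - s‖ := h1
        _ ≤ C * δ := by nlinarith
        _ = ε / 2 := hCδ
    have h4 : ε / 2 ≤ ‖η s‖ := by
      have := norm_sub_norm_le (η a) (η s)
      linarith [h3, hηa, this]
    have : (0:ℝ) ≤ ε / 2 := by linarith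
    simpa [hf] using pow_le_pow_left₀ this h4 2
  -- integral lower bound on an interval
  set c : ℝ := δ * (ε/2)^2 with hc
  have hcpos : 0 < c := by positivity
  have intlb : ∀ a : ℝ, 0 ≤ a → ε ≤ ‖η a‖ → c ≤ ∫ s in a..(a+δ), f s := by
    intro a ha hηa
    have hab : a ≤ a + δ := by linarith
    have : ∫ s in a..(a+δ), (ε/2)^2 ≤ ∫ s in a..(a+δ), f s :=
      intervalIntegral.integral_mono_on hab (intervalIntegrable_const)
        (hcont.intervalIntegrable a (a+δ)) (fun x hx => key a ha hηa x hx)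
    rw [intervalIntegral.integral_const, smul_eq_mul] at this
    calc c = (a + δ - a) * (ε/2)^2 := by ring
      _ ≤ _ := this
  -- construct the sequence
  choose T hT1 hT2 using hfreq
  set t : ℕ → ℝ := fun k => Nat.rec (T 0) (fun _ prev => T (prev + δ)) k with ht
  have ht0 : ∀ k, 0 ≤ t k := by
    intro k
    induction k with
    | zero => exact hT1 0
    | succ k ih => exact le_trans (by linarith [hδpos]) (hT1 (t k + δ))
  have htstep : ∀ k, t k + δ ≤ t (k+1) := fun k => hT1 (t k + δ)
  have htη : ∀ k, ε ≤ ‖η (t k)‖ := by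
    intro k
    cases k with
    | zero => exact hT2 0
    | succ k => exact hT2 (t k + δ)
  have hmon : ∀ j, t 0 ≤ t j := by
    intro j
    induction j with
    | zero => exact le_rfl
    | succ j ihj => linarith [htstep j, hδpos]
  -- inductive lower bound for the integral
  have claim : ∀ k : ℕ, (k+1 : ℝ) * c ≤ ∫ s in (t 0)..(t k + δ), f s := by
    intro k
    induction k with
    | zero => simpa using intlb (t 0) (ht0 0) (htη 0)
    | succ k ih =>
      have h1 : t 0 ≤ t k + δ := by linarith [hmon k, hδpos]
      have h2 : t k + δ ≤ t (k+1) := htstep k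
      have h3 : t (k+1) ≤ t (k+1) + δ := by linarith [hδpos]
      have hii : ∀ a b : ℝ, IntervalIntegrable f volume a b := fun a b =>
        hcont.intervalIntegrable a b
      have split : ∫ s in (t 0)..(t (k+1) + δ), f s
          = (∫ s in (t 0)..(t (k+1)), f s) + ∫ s in (t (k+1))..(t (k+1) + δ), f s :=
        (intervalIntegral.integral_add_adjacent_intervals (hii _ _) (hii _ _)).symm
      have mono : (∫ s in (t 0)..(t k + δ), f s) ≤ ∫ s in (t 0)..(t (k+1)), f s :=
        intervalIntegral.integral_mono_interval le_rfl h1 h2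
          (Filter.Eventually.of_forall fun x => hf0 x) (hii _ _)
      have last : c ≤ ∫ s in (t (k+1))..(t (k+1) + δ), f s :=
        intlb (t (k+1)) (ht0 (k+1)) (htη (k+1))
      rw [split]
      push_cast
      linarith
  -- compare with the total integral
  set I : ℝ := ∫ s in Set.Ici (0:ℝ), f s with hI
  have hle : ∀ k : ℕ, (k+1 : ℝ) * c ≤ I := by
    intro k
    have h1 : t 0 ≤ t k + δ := by linarith [hmon k, hδpos]
    have heq : ∫ s in (t 0)..(t k + δ), f s = ∫ s in Set.Ioc (t 0) (t k + δ), f s :=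
      intervalIntegral.integral_of_le h1
    have hsub : Set.Ioc (t 0) (t k + δ) ⊆ Set.Ici (0:ℝ) := fun x hx =>
      le_trans (ht0 0) (le_of_lt hx.1)
    have hmono : ∫ s in Set.Ioc (t 0) (t k + δ), f s ≤ I :=
      setIntegral_mono_set hint (Filter.Eventually.of_forall fun x => hf0 x)
        (Filter.Eventually.of_forall hsub)
    calc (k+1 : ℝ) * c ≤ ∫ s in (t 0)..(t k + δ), f s := claim k
      _ = _ := heq
      _ ≤ I := hmono
  obtain ⟨k, hk⟩ := exists_nat_gt (I / c)
  have : I / c < (k+1 : ℝ) := by push_cast; linarith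
  have : I < (k+1 : ℝ) * c := by
    rwa [div_lt_iff₀ hcpos] at this
  linarith [hle k]
end
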